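/- Let S be a commutative Noetherian ring and J ⊆ S an ideal. Let P →^ψ Q →^φ T be an exact sequence of finitely generated S-modules, and for each n ≥ 0 let ψ_n : P/J^nP → Q/J^nQ and φ_n : Q/J^nQ → T/J^nT be the induced maps and M_n = ker(φ_n)/im(ψ_n) the homology of the induced sequence at the middle term. Then there exists m ≥ 0 such that for all n ≥ 0 the natural map M_{m+n} → M_n (induced by the quotient maps Q/J^{m+n}Q → Q/J^nQ) is zero. -/
import Mathlib


/-- **Lemma (Artin–Rees).** Let `S` be a commutative Noetherian ring, `J ⊆ S` an ideal, and
`P →[ψ] Q →[φ] T` an exact sequence of finitely generated `S`-modules.  Let `M_n` denote the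
middle homology of the induced sequence `P/JⁿP → Q/JⁿQ → T/JⁿT`.  Then there is an `m ≥ 0`
such that for all `n` the natural map `M_{m+n} → M_n` is zero; elementwise: whenever
`φ q ∈ J^{m+n} T` there is `p` with `q - ψ p ∈ Jⁿ Q`. -/
theorem artinRees_middle_homology_eventually_zero
    (S : Type*) [CommRing S] [IsNoetherianRing S] (J : Ideal S)
    (P Q T : Type*) [AddCommGroup P] [Module S P] [Module.Finite S P]
    [AddCommGroup Q] [Module S Q] [Module.Finite S Q]
    [AddCommGroup T] [Module S T] [Module.Finite S T]
    (ψ : P →ₗ[S] Q) (φ : Q →ₗ[S] T) (hexact : Function.Exact ⇑ψ ⇑φ) :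
    ∃ m : ℕ, ∀ (n : ℕ) (q : Q), φ q ∈ (J ^ (m + n) • ⊤ : Submodule S T) →
      ∃ p : P, q - ψ p ∈ (J ^ n • ⊤ : Submodule S Q) := by
  -- choose a surjection from a finite free module (to dodge universe issues in Artin–Rees)
  obtain ⟨r, π, hπ⟩ := Module.Finite.exists_fin' S T
  have hπtop : LinearMap.range π = ⊤ := LinearMap.range_eq_top.mpr hπ
  set N : Submodule S (Fin r → S) := (LinearMap.range φ).comap π with hN
  obtain ⟨k, hk⟩ := Ideal.exists_pow_inf_eq_pow_smul J N
  refine ⟨k, fun n q hq => ?_⟩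
  have hmap : ∀ i : ℕ,
      Submodule.map π (J ^ i • ⊤ : Submodule S (Fin r → S)) = (J ^ i • ⊤ : Submodule S T) := by
    intro i
    rw [Submodule.map_smul'', Submodule.map_top, hπtop]
  -- lift `φ q` to an element of `J^(k+n) • ⊤` in the free module
  obtain ⟨f, hf, hfq⟩ : ∃ f ∈ (J ^ (k + n) • ⊤ : Submodule S (Fin r → S)), π f = φ q := by
    have : φ q ∈ Submodule.map π (J ^ (k + n) • ⊤ : Submodule S (Fin r → S)) :=
      (hmap (k + n)).symm ▸ hq
    exact this
  have hfN : f ∈ N := by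
    rw [hN, Submodule.mem_comap, hfq]
    exact ⟨q, rfl⟩
  have h1 : f ∈ (J ^ (k + n) • ⊤ ⊓ N : Submodule S (Fin r → S)) := ⟨hf, hfN⟩
  rw [hk (k + n) (Nat.le_add_right k n), Nat.add_sub_cancel_left] at h1
  have h2 : f ∈ (J ^ n • N : Submodule S (Fin r → S)) :=
    Submodule.smul_mono le_rfl inf_le_right h1
  -- push forward to `T`
  have h3 : φ q ∈ Submodule.map φ (J ^ n • ⊤ : Submodule S Q) := by
    have hπf : π f ∈ Submodule.map π (J ^ n • N) := Submodule.mem_map_of_mem h2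
    rw [Submodule.map_smul''] at hπf
    have hmapN : Submodule.map π N = LinearMap.range φ := by
      rw [hN, Submodule.map_comap_eq, hπtop, top_inf_eq]
    rw [hmapN, hfq] at hπf
    rwa [Submodule.map_smul'', Submodule.map_top]
  obtain ⟨q', hq', hq'eq⟩ := h3
  have hker : φ (q - q') = 0 := by simp [map_sub, hq'eq]
  obtain ⟨p, hp⟩ := (hexact (q - q')).mp hker
  exact ⟨p, by rwa [hp, sub_sub_cancel]⟩
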